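/- Let τ > 0, α, F ∈ ℝ, let u : ℝ → ℝ be continuous, and let z : ℝ → ℝ be twice differentiable with z''(t) = F + α · u(t) for all t in the interval [t₀, t₀ + τ] (i.e. the unknown term of the second-order ultra-local model is constant on this window). Then the second-order algebraic estimator recovers F exactly: F = (60/τ⁵) · ∫₀^τ (τ² - 6τσ + 6σ²) · z(t₀ + σ) dσ - (30α/τ⁵) · ∫₀^τ σ²(τ - σ)² · u(t₀ + σ) dσ. In particular the estimate is independent of both initial conditions z(t₀) and z'(t₀), since the kernel τ² - 6τσ + 6σ² annihilates all affine functions of σ on [0, τ]. -/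

import Mathlib

/-- Second-order algebraic estimator of the model-free setting: if the
ultra-local model z'' = F + α u holds with F constant on the window
[t₀, t₀ + τ], then the estimator recovers F exactly, independently of both
initial conditions z(t₀) and z'(t₀). -/
theorem second_order_algebraic_estimator_exact
    (τ α F : ℝ) (hτ : 0 < τ) (u z z' : ℝ → ℝ) (hu : Continuous u) (t₀ : ℝ)
    (hz : ∀ t ∈ Set.Icc t₀ (t₀ + τ), HasDerivAt z (z' t) t)
    (hz' : ∀ t ∈ Set.Icc t₀ (t₀ + τ), HasDerivAt z' (F + α * u t) t) :
    F = (60 / τ ^ 5) *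
        (∫ σ in (0:ℝ)..τ, (τ ^ 2 - 6 * τ * σ + 6 * σ ^ 2) * z (t₀ + σ))
      - (30 * α / τ ^ 5) *
        ∫ σ in (0:ℝ)..τ, σ ^ 2 * (τ - σ) ^ 2 * u (t₀ + σ) := by
  have hτ' : τ ≠ 0 := hτ.ne'
  have hmem : ∀ σ ∈ Set.Icc (0:ℝ) τ, t₀ + σ ∈ Set.Icc t₀ (t₀ + τ) := by
    intro σ hσ; exact ⟨by linarith [hσ.1], by linarith [hσ.2]⟩
  have haff : ∀ σ : ℝ, HasDerivAt (fun s : ℝ => t₀ + s) 1 σ := by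
    intro σ; simpa using (hasDerivAt_id σ).const_add t₀
  have hzd : ∀ σ ∈ Set.Icc (0:ℝ) τ,
      HasDerivAt (fun s => z (t₀ + s)) (z' (t₀ + σ)) σ := by
    intro σ hσ
    have := (hz _ (hmem σ hσ)).comp σ (haff σ)
    rw [mul_one] at this
    exact this
  have hz'd : ∀ σ ∈ Set.Icc (0:ℝ) τ,
      HasDerivAt (fun s => z' (t₀ + s)) (F + α * u (t₀ + σ)) σ := by
    intro σ hσ
    have := (hz' _ (hmem σ hσ)).comp σ (haff σ)
    rw [mul_one] at this
    exact this
  have hzc : ContinuousOn (fun σ => z (t₀ + σ)) (Set.Icc 0 τ) := fun σ hσ =>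
    ((hzd σ hσ).continuousAt).continuousWithinAt
  have hz'c : ContinuousOn (fun σ => z' (t₀ + σ)) (Set.Icc 0 τ) := fun σ hσ =>
    ((hz'd σ hσ).continuousAt).continuousWithinAt
  have huIcc : Set.uIcc (0:ℝ) τ = Set.Icc 0 τ := Set.uIcc_of_le hτ.le
  -- the key derivative identity
  have key : ∀ σ ∈ Set.uIcc (0:ℝ) τ,
      HasDerivAt (fun s => (τ^2*s - 3*τ*s^2 + 2*s^3) * z (t₀ + s)
          - (τ^2*s^2/2 - τ*s^3 + s^4/2) * z' (t₀ + s))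
        ((τ ^ 2 - 6 * τ * σ + 6 * σ ^ 2) * z (t₀ + σ)
          - (τ^2*σ^2/2 - τ*σ^3 + σ^4/2) * (F + α * u (t₀ + σ))) σ := by
    intro σ hσ
    rw [huIcc] at hσ
    have h1 : HasDerivAt (fun s : ℝ => τ^2*s - 3*τ*s^2 + 2*s^3)
        (τ ^ 2 - 6 * τ * σ + 6 * σ ^ 2) σ := by
      have := ((hasDerivAt_pow 3 σ).const_mul 2).add_const 0
      have h := (((hasDerivAt_id σ).const_mul (τ^2)).sub
        ((hasDerivAt_pow 2 σ).const_mul (3*τ))).add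
        ((hasDerivAt_pow 3 σ).const_mul 2)
      exact h.congr_deriv (by ring)
    have h2 : HasDerivAt (fun s : ℝ => τ^2*s^2/2 - τ*s^3 + s^4/2)
        (τ^2*σ - 3*τ*σ^2 + 2*σ^3) σ := by
      have h := (((hasDerivAt_pow 2 σ).const_mul (τ^2/2)).sub
        ((hasDerivAt_pow 3 σ).const_mul τ)).add
        ((hasDerivAt_pow 4 σ).const_mul (1/2))
      have : (fun s : ℝ => τ^2/2*s^2 - τ*s^3 + 1/2*s^4)
          = fun s : ℝ => τ^2*s^2/2 - τ*s^3 + s^4/2 := by funext s; ring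
      rw [← this]
      exact h.congr_deriv (by ring)
    have h := (h1.mul (hzd σ hσ)).sub (h2.mul (hz'd σ hσ))
    exact h.congr_deriv (by ring)
  have cK : Continuous (fun σ : ℝ => τ ^ 2 - 6 * τ * σ + 6 * σ ^ 2) := by fun_prop
  have cK₂ : Continuous (fun σ : ℝ => τ^2*σ^2/2 - τ*σ^3 + σ^4/2) := by fun_prop
  have cu : Continuous (fun σ : ℝ => F + α * u (t₀ + σ)) := by fun_prop
  have hcont : ContinuousOn (fun σ => (τ ^ 2 - 6 * τ * σ + 6 * σ ^ 2) * z (t₀ + σ)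
      - (τ^2*σ^2/2 - τ*σ^3 + σ^4/2) * (F + α * u (t₀ + σ))) (Set.uIcc 0 τ) := by
    rw [huIcc]
    exact (cK.continuousOn.mul hzc).sub (cK₂.mul cu).continuousOn
  have hint := intervalIntegral.integral_eq_sub_of_hasDerivAt key
    (hcont.intervalIntegrable)
  -- boundary terms vanish
  have hbd : ((τ^2*τ - 3*τ*τ^2 + 2*τ^3) * z (t₀ + τ)
      - (τ^2*τ^2/2 - τ*τ^3 + τ^4/2) * z' (t₀ + τ))
      - ((τ^2*0 - 3*τ*0^2 + 2*0^3) * z (t₀ + 0)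
      - (τ^2*0^2/2 - τ*0^3 + 0^4/2) * z' (t₀ + 0)) = 0 := by ring
  rw [hbd] at hint
  -- split the integral
  have hKzint : IntervalIntegrable (fun σ => (τ ^ 2 - 6 * τ * σ + 6 * σ ^ 2) * z (t₀ + σ))
      MeasureTheory.volume 0 τ := by
    apply ContinuousOn.intervalIntegrable
    rw [huIcc]
    exact cK.continuousOn.mul hzc
  have hK₂uint : IntervalIntegrable (fun σ => (τ^2*σ^2/2 - τ*σ^3 + σ^4/2) * (F + α * u (t₀ + σ)))
      MeasureTheory.volume 0 τ :=
    (cK₂.mul cu).intervalIntegrable 0 τ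
  rw [intervalIntegral.integral_sub hKzint hK₂uint, sub_eq_zero] at hint
  -- compute ∫ K₂ (F + α u) = F τ⁵/60 + (α/2) ∫ σ²(τ-σ)² u
  have hsplit : (∫ σ in (0:ℝ)..τ, (τ^2*σ^2/2 - τ*σ^3 + σ^4/2) * (F + α * u (t₀ + σ)))
      = F * (τ^5/60) + (α/2) * ∫ σ in (0:ℝ)..τ, σ ^ 2 * (τ - σ) ^ 2 * u (t₀ + σ) := by
    have e1 : ∀ σ : ℝ, (τ^2*σ^2/2 - τ*σ^3 + σ^4/2) * (F + α * u (t₀ + σ))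
        = F * (τ^2*σ^2/2 - τ*σ^3 + σ^4/2) + (α/2) * (σ ^ 2 * (τ - σ) ^ 2 * u (t₀ + σ)) := by
      intro σ; ring
    simp_rw [e1]
    rw [intervalIntegral.integral_add, intervalIntegral.integral_const_mul,
      intervalIntegral.integral_const_mul]
    · congr 1
      have : (∫ σ in (0:ℝ)..τ, (τ^2*σ^2/2 - τ*σ^3 + σ^4/2)) = τ^5/60 := by
        have : (fun σ : ℝ => τ^2*σ^2/2 - τ*σ^3 + σ^4/2)
            = fun σ : ℝ => τ^2/2*σ^2 - τ*σ^3 + 1/2*σ^4 := by funext s; ring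
        rw [this]
        simp [intervalIntegral.integral_add, intervalIntegral.integral_sub,
          intervalIntegral.integral_const_mul, integral_pow,
          (Continuous.intervalIntegrable (by fun_prop) 0 τ : IntervalIntegrable (fun σ:ℝ => τ^2/2*σ^2) MeasureTheory.volume 0 τ),
          (Continuous.intervalIntegrable (by fun_prop) 0 τ : IntervalIntegrable (fun σ:ℝ => τ*σ^3) MeasureTheory.volume 0 τ),
          (Continuous.intervalIntegrable (by fun_prop) 0 τ : IntervalIntegrable (fun σ:ℝ => 1/2*σ^4) MeasureTheory.volume 0 τ)]
        ring
      rw [this]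
    · exact (cK₂.intervalIntegrable 0 τ).const_mul F
    · exact ((Continuous.intervalIntegrable (by fun_prop) 0 τ : IntervalIntegrable (fun σ:ℝ => σ^2*(τ-σ)^2*u (t₀+σ)) MeasureTheory.volume 0 τ)).const_mul (α/2)
  rw [hsplit] at hint
  rw [hint]
  field_simp
  ring
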